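/- The sign of the transversal eigenvalue lambda_3 = a_{3,1} u1*/D_1 + a_{3,2} u2*/D_2 - 1 at e_{1,2} equals the sign of Delta_{1,2} [a_{1,2}(a_{2,1}-a_{1,1}) + a_{2,1}(a_{1,2}-a_{2,2})], where Delta_{1,2} = (2 a_{3,1} - a_{1,1} - a_{2,1})(a_{1,2} - a_{2,2}) + (2 a_{3,2} - a_{1,2} - a_{2,2})(a_{2,1} - a_{1,1}). -/

import Mathlib

theorem sign_of_transversal_eigenvalue
    (a11 a12 a21 a22 a31 a32 : ℝ)
    (h11 : 0 < a11) (h12 : 0 < a12) (h21 : 0 < a21) (h22 : 0 < a22)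
    (h31 : 0 < a31) (h32 : 0 < a32)
    (hD : a12 * (a21 - a11) + a21 * (a12 - a22) ≠ 0)
    (hu1 : a21 * (a12 - a22) / (a12 * (a21 - a11) + a21 * (a12 - a22)) ∈ Set.Ioo (0 : ℝ) 1) :
    let u1 := a21 * (a12 - a22) / (a12 * (a21 - a11) + a21 * (a12 - a22))
    let u2 := 1 - u1
    let D1 := a11 * u1 + a21 * u2
    let D2 := a12 * u1 + a22 * u2
    let lam3 := a31 * u1 / D1 + a32 * u2 / D2 - 1
    let Delta := (2 * a31 - a11 - a21) * (a12 - a22) + (2 * a32 - a12 - a22) * (a21 - a11)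
    Real.sign lam3 =
      Real.sign (Delta * (a12 * (a21 - a11) + a21 * (a12 - a22))) := by
  intro u1 u2 D1 D2 lam3 Delta
  obtain ⟨hu1pos, hu1lt⟩ := hu1
  set S : ℝ := a12 * (a21 - a11) + a21 * (a12 - a22) with hS
  set K : ℝ := a12 * a21 - a11 * a22 with hK
  have hu2pos : 0 < u2 := by simp only [u2]; linarith
  have hD1pos : 0 < D1 := by
    have : 0 < u1 := hu1pos
    positivity
  have hD1eq : D1 = a21 * K / S := by
    simp only [D1, u2, u1]
    rw [← hS]
    field_simp
    ring
  have hKS : 0 < K * S := by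
    have h1 : 0 < a21 * K / S := hD1eq ▸ hD1pos
    rcases lt_trichotomy S 0 with hs | hs | hs
    · have : a21 * K < 0 := by
        by_contra h
        push_neg at h
        have := div_nonpos_of_nonneg_of_nonpos h hs.le
        linarith
      have : K < 0 := by nlinarith
      nlinarith
    · exact absurd hs hD
    · have : 0 < a21 * K := by
        by_contra h
        push_neg at h
        have := div_nonpos_of_nonpos_of_nonneg h hs.le
        linarith
      have : 0 < K := by nlinarith
      nlinarith
  have hKne : K ≠ 0 := by
    intro h; rw [h] at hKS; simp at hKS
  have hlam : lam3 = Delta / (2 * K) := by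
    have hD2eq : D2 = a12 * K / S := by
      simp only [D2, u2, u1]
      rw [← hS]
      field_simp
      ring
    simp only [lam3, Delta, hD1eq, hD2eq, u2, u1]
    rw [← hS]
    field_simp
    ring
  rw [hlam]
  rcases lt_trichotomy Delta 0 with hd | hd | hd
  · rcases lt_trichotomy S 0 with hs | hs | hs
    · have hk : K < 0 := by rcases mul_pos_iff.mp hKS with ⟨h1,h2⟩|⟨h1,h2⟩ <;> linarith
      rw [Real.sign_of_pos (mul_pos_of_neg_of_neg hd hs),
        Real.sign_of_pos (div_pos_of_neg_of_neg hd (by linarith))]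
    · exact absurd hs hD
    · have hk : 0 < K := by rcases mul_pos_iff.mp hKS with ⟨h1,h2⟩|⟨h1,h2⟩ <;> linarith
      rw [Real.sign_of_neg (mul_neg_of_neg_of_pos hd hs),
        Real.sign_of_neg (div_neg_of_neg_of_pos hd (by linarith))]
  · simp [hd]
  · rcases lt_trichotomy S 0 with hs | hs | hs
    · have hk : K < 0 := by rcases mul_pos_iff.mp hKS with ⟨h1,h2⟩|⟨h1,h2⟩ <;> linarith
      rw [Real.sign_of_neg (mul_neg_of_pos_of_neg hd hs),
        Real.sign_of_neg (div_neg_of_pos_of_neg hd (by linarith))]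
    · exact absurd hs hD
    · have hk : 0 < K := by rcases mul_pos_iff.mp hKS with ⟨h1,h2⟩|⟨h1,h2⟩ <;> linarith
      rw [Real.sign_of_pos (mul_pos hd hs),
        Real.sign_of_pos (div_pos hd (by linarith))]
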